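/- Feasibility of the normalized label variables for the robust-PoA linear program: let δ ≥ 0, let γ, γ̃ ∈ ℝ_{≥0}^{E×[m]} satisfy |γ̃_{e,j} − γ_{e,j}| ≤ δ·γ_{e,j} for all e, j, let a^NE be a pure Nash equilibrium of (G(γ), T(γ̃)) with L(a^NE; γ) > 0, and let a' ∈ 𝒜 be any allocation. Define labels (x_e, y_e, z_e) of each resource e with respect to the pair (a^NE, a'), and set θ̄(x,y,z,j) := (Σ_{e : (x_e,y_e,z_e)=(x,y,z)} γ_{e,j}) / L(a^NE;γ) and θ̂̄(x,y,z,j) := (Σ_{e : (x_e,y_e,z_e)=(x,y,z)} γ̃_{e,j}) / L(a^NE;γ). Then (θ̄, θ̂̄) satisfies: (i) Σ_{(x,y,z,j)∈I} (x+y)·b_j(x+y)·θ̄(x,y,z,j) = 1; (ii) Σ_{(x,y,z,j)∈I} [y·b_j(x+y) − z·b_j(x+y+1)]·θ̄(x,y,z,j) + [y·τ_j⋆(x+y) − z·τ_j⋆(x+y+1)]·θ̂̄(x,y,z,j) ≤ 0; (iii) (1−δ)·θ̄ ≤ θ̂̄ ≤ (1+δ)·θ̄ componentwise; and the LP objective evaluated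 at θ̄ equals Σ_{(x,y,z,j)∈I} (x+z)·b_j(x+z)·θ̄(x,y,z,j) = L(a'; γ)/L(a^NE; γ). -/

import Mathlib

open Finset

namespace CG

variable {n m : ℕ} {E : Type} [Fintype E] [DecidableEq E]

/-- `load a e` is the number of agents using resource `e` under allocation `a`. -/
def load (a : Fin n → Finset E) (e : E) : ℕ :=
  (Finset.univ.filter fun i => e ∈ a i).card

/-- the cost `ℓ_e(k; γ) = Σ_j γ_{e,j} b_j(k)` of resource `e` at load `k`. -/
def resCost (b : Fin m → ℕ → ℝ) (γ : E → Fin m → ℝ) (e : E) (k : ℕ) : ℝ :=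
  ∑ j, γ e j * b j k

/-- the toll `τ_e(k; γ̃) = Σ_j γ̃_{e,j} τ_j⋆(k)` on resource `e` at load `k`. -/
def resToll (τs : Fin m → ℕ → ℝ) (γt : E → Fin m → ℝ) (e : E) (k : ℕ) : ℝ :=
  ∑ j, γt e j * τs j k

/-- agent `i`'s cost `J_i(a; γ, γ̃)` at allocation `a`. -/
def agentCost (b τs : Fin m → ℕ → ℝ) (γ γt : E → Fin m → ℝ)
    (a : Fin n → Finset E) (i : Fin n) : ℝ :=
  ∑ e ∈ a i, (resCost b γ e (load a e) + resToll τs γt e (load a e))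

/-- `a` is a pure Nash equilibrium of the tolled congestion game `(G(γ), T(γ̃))`. -/
def IsNash (A : Fin n → Finset (Finset E)) (b τs : Fin m → ℕ → ℝ)
    (γ γt : E → Fin m → ℝ) (a : Fin n → Finset E) : Prop :=
  (∀ i, a i ∈ A i) ∧
    ∀ i : Fin n, ∀ ai' ∈ A i,
      agentCost b τs γ γt a i ≤ agentCost b τs γ γt (Function.update a i ai') i

/-- the system cost `L(a; γ) = Σ_e |a|_e ℓ_e(|a|_e; γ)`. -/
def sysCost (b : Fin m → ℕ → ℝ) (γ : E → Fin m → ℝ) (a : Fin n → Finset E) : ℝ :=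
  ∑ e, (load a e : ℝ) * resCost b γ e (load a e)

/-- the price of anarchy `PoA(G(γ), T(γ̃))`. -/
noncomputable def PoA (A : Fin n → Finset (Finset E)) (b τs : Fin m → ℕ → ℝ)
    (γ γt : E → Fin m → ℝ) : ℝ :=
  sSup (sysCost b γ '' {a | IsNash A b τs γ γt a}) /
    sInf (sysCost b γ '' {a : Fin n → Finset E | ∀ i, a i ∈ A i})

/-- `x_e`: number of agents using `e` under both `a` and `a'`. -/
def labelX (a a' : Fin n → Finset E) (e : E) : ℕ :=
  (Finset.univ.filter fun i => e ∈ a i ∧ e ∈ a' i).card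

/-- `y_e`: number of agents using `e` under `a` but not `a'`. -/
def labelY (a a' : Fin n → Finset E) (e : E) : ℕ :=
  (Finset.univ.filter fun i => e ∈ a i ∧ e ∉ a' i).card

/-- `z_e`: number of agents using `e` under `a'` but not `a`. -/
def labelZ (a a' : Fin n → Finset E) (e : E) : ℕ :=
  (Finset.univ.filter fun i => e ∉ a i ∧ e ∈ a' i).card

/-- `θ(x,y,z,j) = Σ_{e : (x_e,y_e,z_e) = (x,y,z)} γ_{e,j}`. -/
def labelSum (γ : E → Fin m → ℝ) (a a' : Fin n → Finset E) (x y z : ℕ) (j : Fin m) : ℝ :=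
  ∑ e ∈ Finset.univ.filter
      (fun e => labelX a a' e = x ∧ labelY a a' e = y ∧ labelZ a a' e = z),
    γ e j

/-- sum of `f` over the index set `I = {(x,y,z,j) : 1 ≤ x+y+z ≤ n}`. -/
def sumI (n : ℕ) (f : ℕ → ℕ → ℕ → Fin m → ℝ) : ℝ :=
  ∑ x ∈ Finset.range (n + 1), ∑ y ∈ Finset.range (n + 1), ∑ z ∈ Finset.range (n + 1),
    ∑ j : Fin m, if 1 ≤ x + y + z ∧ x + y + z ≤ n then f x y z j else 0

/-- feasibility for the robust-PoA linear program at misspecification level `δ`. -/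
def Feasible (n : ℕ) (b τs : Fin m → ℕ → ℝ) (δ : ℝ)
    (θ θh : ℕ → ℕ → ℕ → Fin m → ℝ) : Prop :=
  (∀ x y z j, 0 ≤ θ x y z j) ∧
  (∀ x y z j, 0 ≤ θh x y z j) ∧
  sumI n (fun x y z j => (x + y : ℝ) * b j (x + y) * θ x y z j) = 1 ∧
  sumI n (fun x y z j =>
      ((y : ℝ) * b j (x + y) - (z : ℝ) * b j (x + y + 1)) * θ x y z j
        + ((y : ℝ) * τs j (x + y) - (z : ℝ) * τs j (x + y + 1)) * θh x y z j) ≤ 0 ∧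
  (∀ x y z j, (1 - δ) * θ x y z j ≤ θh x y z j ∧ θh x y z j ≤ (1 + δ) * θ x y z j)

/-- `p⋆(δ)`: value of the robust-PoA linear program. -/
noncomputable def pstar (n : ℕ) (m : ℕ) (b τs : Fin m → ℕ → ℝ) (δ : ℝ) : ℝ :=
  sInf { r : ℝ | ∃ θ θh : ℕ → ℕ → ℕ → Fin m → ℝ, Feasible n b τs δ θ θh ∧
    r = sumI n (fun x y z j => (x + z : ℝ) * b j (x + z) * θ x y z j) }

end CG

section Aux

open Finset CG

variable {n m : ℕ} {E : Type} [Fintype E] [DecidableEq E]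

lemma labelX_add_labelY (a a' : Fin n → Finset E) (e : E) :
    labelX a a' e + labelY a a' e = load a e := by
  classical
  unfold labelX labelY load
  rw [← Finset.filter_filter, ← Finset.filter_filter,
    Finset.card_filter_add_card_filter_not]

lemma labelX_add_labelZ (a a' : Fin n → Finset E) (e : E) :
    labelX a a' e + labelZ a a' e = load a' e := by
  classical
  unfold labelX labelZ load
  have h1 : (Finset.univ.filter fun i : Fin n => e ∈ a i ∧ e ∈ a' i)
      = ((Finset.univ.filter fun i : Fin n => e ∈ a' i).filter fun i => e ∈ a i) := by
    rw [Finset.filter_filter]; apply Finset.filter_congr; intro i _; tauto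
  have h2 : (Finset.univ.filter fun i : Fin n => e ∉ a i ∧ e ∈ a' i)
      = ((Finset.univ.filter fun i : Fin n => e ∈ a' i).filter fun i => ¬ e ∈ a i) := by
    rw [Finset.filter_filter]; apply Finset.filter_congr; intro i _; tauto
  rw [h1, h2, Finset.card_filter_add_card_filter_not]

lemma labelXYZ_le (a a' : Fin n → Finset E) (e : E) :
    labelX a a' e + labelY a a' e + labelZ a a' e ≤ n := by
  classical
  rw [labelX_add_labelY]
  have hd : Disjoint (Finset.univ.filter fun i : Fin n => e ∈ a i)
      (Finset.univ.filter fun i : Fin n => e ∉ a i ∧ e ∈ a' i) := by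
    rw [Finset.disjoint_left]
    intro i hi hj
    simp only [Finset.mem_filter] at hi hj
    exact hj.2.1 hi.2
  unfold load labelZ
  calc (Finset.univ.filter fun i : Fin n => e ∈ a i).card
        + (Finset.univ.filter fun i : Fin n => e ∉ a i ∧ e ∈ a' i).card
      = ((Finset.univ.filter fun i : Fin n => e ∈ a i)
          ∪ (Finset.univ.filter fun i : Fin n => e ∉ a i ∧ e ∈ a' i)).card :=
        (Finset.card_union_of_disjoint hd).symm
    _ ≤ (Finset.univ : Finset (Fin n)).card := Finset.card_le_univ _
    _ = n := by simp

lemma sum_over_agents (a : Fin n → Finset E) (f : E → ℝ) :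
    ∑ i, ∑ e ∈ a i, f e = ∑ e, (load a e : ℝ) * f e := by
  classical
  have h1 : ∀ i, ∑ e ∈ a i, f e = ∑ e, if e ∈ a i then f e else 0 := by
    intro i
    rw [← Finset.sum_filter]
    congr 1
    ext e
    simp
  simp only [h1]
  rw [Finset.sum_comm]
  refine Finset.sum_congr rfl fun e _ => ?_
  rw [← Finset.sum_filter, Finset.sum_const, nsmul_eq_mul]
  rfl

lemma load_update_mem (a : Fin n → Finset E) (i : Fin n) (ai' : Finset E) (e : E)
    (h : e ∈ a i) (h' : e ∈ ai') :
    load (Function.update a i ai') e = load a e := by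
  unfold load
  congr 1
  apply Finset.filter_congr
  intro k _
  rcases eq_or_ne k i with rfl | hk
  · simp [Function.update_self, h, h']
  · simp [Function.update_of_ne hk]

lemma load_update_not_mem (a : Fin n → Finset E) (i : Fin n) (ai' : Finset E) (e : E)
    (h : e ∉ a i) (h' : e ∈ ai') :
    load (Function.update a i ai') e = load a e + 1 := by
  unfold load
  have : (Finset.univ.filter fun k => e ∈ Function.update a i ai' k)
      = insert i (Finset.univ.filter fun k => e ∈ a k) := by
    ext k
    rcases eq_or_ne k i with rfl | hk
    · simp [Function.update_self, h']
    · simp [Function.update_of_ne hk, hk]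
  rw [this, Finset.card_insert_of_notMem (by simp [h])]

lemma sum_comm4 {α β γ' δ' M : Type*} [AddCommMonoid M]
    (s : Finset α) (t : Finset β) (u : Finset γ') (v : Finset δ')
    (f : α → β → γ' → δ' → M) :
    ∑ a ∈ s, ∑ b ∈ t, ∑ c ∈ u, ∑ d ∈ v, f a b c d
      = ∑ d ∈ v, ∑ a ∈ s, ∑ b ∈ t, ∑ c ∈ u, f a b c d := by
  have h1 : ∀ a ∈ s, ∑ b ∈ t, ∑ c ∈ u, ∑ d ∈ v, f a b c d
      = ∑ d ∈ v, ∑ b ∈ t, ∑ c ∈ u, f a b c d := by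
    intro a _
    have h2 : ∀ b ∈ t, ∑ c ∈ u, ∑ d ∈ v, f a b c d = ∑ d ∈ v, ∑ c ∈ u, f a b c d :=
      fun b _ => Finset.sum_comm
    rw [Finset.sum_congr rfl h2, Finset.sum_comm]
  rw [Finset.sum_congr rfl h1, Finset.sum_comm]

set_option linter.unusedSectionVars false in
lemma pick_triple (N X Y Z : ℕ) (hX : X ≤ N) (hY : Y ≤ N) (hZ : Z ≤ N) (u : ℕ → ℕ → ℕ → ℝ) :
    (∑ x ∈ Finset.range (N + 1), ∑ y ∈ Finset.range (N + 1), ∑ z ∈ Finset.range (N + 1),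
      if X = x ∧ Y = y ∧ Z = z then u x y z else 0) = u X Y Z := by
  rw [Finset.sum_eq_single_of_mem X (Finset.mem_range.2 (Nat.lt_succ_of_le hX))]
  · rw [Finset.sum_eq_single_of_mem Y (Finset.mem_range.2 (Nat.lt_succ_of_le hY))]
    · rw [Finset.sum_eq_single_of_mem Z (Finset.mem_range.2 (Nat.lt_succ_of_le hZ))]
      · simp
      · intro c _ hc
        exact if_neg fun h => hc h.2.2.symm
    · intro c _ hc
      refine Finset.sum_eq_zero fun z _ => ?_
      exact if_neg fun h => hc h.2.1.symm
  · intro c _ hc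
    refine Finset.sum_eq_zero fun y _ => Finset.sum_eq_zero fun z _ => ?_
    exact if_neg fun h => hc h.1.symm

set_option linter.unusedSectionVars false in
/-- Key expansion: `sumI` of coefficient times `labelSum` is a sum over resources. -/
lemma sumI_labelSum (c : ℕ → ℕ → ℕ → Fin m → ℝ) (hc : ∀ j, c 0 0 0 j = 0)
    (γ : E → Fin m → ℝ) (a a' : Fin n → Finset E) :
    sumI n (fun x y z j => c x y z j * labelSum γ a a' x y z j)
      = ∑ e, ∑ j, c (labelX a a' e) (labelY a a' e) (labelZ a a' e) j * γ e j := by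
  classical
  unfold sumI labelSum
  -- abbreviate
  set t : E → ℕ → ℕ → ℕ → ℝ := fun e x y z => ∑ j, c x y z j * γ e j with ht
  have step1 : ∀ x y z : ℕ,
      (∑ j, if 1 ≤ x + y + z ∧ x + y + z ≤ n then
        c x y z j * ∑ e ∈ Finset.univ.filter
          (fun e => labelX a a' e = x ∧ labelY a a' e = y ∧ labelZ a a' e = z), γ e j else 0)
      = ∑ e, if (labelX a a' e = x ∧ labelY a a' e = y ∧ labelZ a a' e = z)
          then (if 1 ≤ x + y + z ∧ x + y + z ≤ n then t e x y z else 0) else 0 := by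
    intro x y z
    by_cases hcond : 1 ≤ x + y + z ∧ x + y + z ≤ n
    · rw [Finset.sum_congr rfl (fun (j : Fin m) _ => if_pos hcond),
        Finset.sum_congr rfl (fun (e : E) _ =>
          congrArg (fun r => if labelX a a' e = x ∧ labelY a a' e = y ∧ labelZ a a' e = z
            then r else (0:ℝ)) (if_pos hcond)),
        ← Finset.sum_filter]
      simp only [Finset.mul_sum]
      rw [Finset.sum_comm]
    · rw [Finset.sum_congr rfl (fun (j : Fin m) _ => if_neg hcond),
        Finset.sum_congr rfl (fun (e : E) _ =>
          congrArg (fun r => if labelX a a' e = x ∧ labelY a a' e = y ∧ labelZ a a' e = z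
            then r else (0:ℝ)) (if_neg hcond))]
      simp
  calc (∑ x ∈ Finset.range (n + 1), ∑ y ∈ Finset.range (n + 1), ∑ z ∈ Finset.range (n + 1),
        ∑ j, if 1 ≤ x + y + z ∧ x + y + z ≤ n then
          c x y z j * ∑ e ∈ Finset.univ.filter
            (fun e => labelX a a' e = x ∧ labelY a a' e = y ∧ labelZ a a' e = z), γ e j else 0)
      = ∑ x ∈ Finset.range (n + 1), ∑ y ∈ Finset.range (n + 1), ∑ z ∈ Finset.range (n + 1),
          ∑ e, if (labelX a a' e = x ∧ labelY a a' e = y ∧ labelZ a a' e = z)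
            then (if 1 ≤ x + y + z ∧ x + y + z ≤ n then t e x y z else 0) else 0 := by
        refine Finset.sum_congr rfl fun x _ => Finset.sum_congr rfl fun y _ =>
          Finset.sum_congr rfl fun z _ => step1 x y z
    _ = ∑ e, ∑ x ∈ Finset.range (n + 1), ∑ y ∈ Finset.range (n + 1), ∑ z ∈ Finset.range (n + 1),
          if (labelX a a' e = x ∧ labelY a a' e = y ∧ labelZ a a' e = z)
            then (if 1 ≤ x + y + z ∧ x + y + z ≤ n then t e x y z else 0) else 0 := by
        exact sum_comm4 _ _ _ _ _
    _ = ∑ e, ∑ j, c (labelX a a' e) (labelY a a' e) (labelZ a a' e) j * γ e j := by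
        refine Finset.sum_congr rfl fun e _ => ?_
        have hle := labelXYZ_le a a' e
        rw [pick_triple n (labelX a a' e) (labelY a a' e) (labelZ a a' e)
          (by omega) (by omega) (by omega)]
        by_cases h0 : 1 ≤ labelX a a' e + labelY a a' e + labelZ a a' e
        · simp only [h0, hle, and_self, if_true, ht]
        · have hx : labelX a a' e = 0 := by omega
          have hy : labelY a a' e = 0 := by omega
          have hz : labelZ a a' e = 0 := by omega
          rw [hx, hy, hz]
          simp [ht, hc]

set_option linter.unusedSectionVars false in
lemma sumI_div (N : ℕ) (f : ℕ → ℕ → ℕ → Fin m → ℝ) (L : ℝ) :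
    sumI N (fun x y z j => f x y z j / L) = sumI N f / L := by
  unfold sumI
  rw [Finset.sum_div]
  refine Finset.sum_congr rfl fun x _ => ?_
  rw [Finset.sum_div]
  refine Finset.sum_congr rfl fun y _ => ?_
  rw [Finset.sum_div]
  refine Finset.sum_congr rfl fun z _ => ?_
  rw [Finset.sum_div]
  refine Finset.sum_congr rfl fun j _ => ?_
  split_ifs <;> simp

set_option linter.unusedSectionVars false in
lemma sumI_add (N : ℕ) (f g : ℕ → ℕ → ℕ → Fin m → ℝ) :
    sumI N (fun x y z j => f x y z j + g x y z j) = sumI N f + sumI N g := by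
  unfold sumI
  rw [← Finset.sum_add_distrib]
  refine Finset.sum_congr rfl fun x _ => ?_
  rw [← Finset.sum_add_distrib]
  refine Finset.sum_congr rfl fun y _ => ?_
  rw [← Finset.sum_add_distrib]
  refine Finset.sum_congr rfl fun z _ => ?_
  rw [← Finset.sum_add_distrib]
  refine Finset.sum_congr rfl fun j _ => ?_
  split_ifs <;> simp

set_option linter.unusedSectionVars false in
/-- sum of deviation costs over agents. -/
lemma sum_update_cost (a a' : Fin n → Finset E) (F : E → ℕ → ℝ) :
    ∑ i, ∑ e ∈ a' i, F e (load (Function.update a i (a' i)) e)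
      = ∑ e, ((labelX a a' e : ℝ) * F e (load a e)
          + (labelZ a a' e : ℝ) * F e (load a e + 1)) := by
  classical
  have h1 : ∀ i : Fin n, ∑ e ∈ a' i, F e (load (Function.update a i (a' i)) e)
      = ∑ e, ((if e ∈ a i ∧ e ∈ a' i then F e (load a e) else 0)
          + (if e ∉ a i ∧ e ∈ a' i then F e (load a e + 1) else 0)) := by
    intro i
    have e1 : ∀ e ∈ a' i, F e (load (Function.update a i (a' i)) e)
        = if e ∈ a i then F e (load a e) else F e (load a e + 1) := by
      intro e he
      by_cases hea : e ∈ a i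
      · rw [if_pos hea, load_update_mem a i (a' i) e hea he]
      · rw [if_neg hea, load_update_not_mem a i (a' i) e hea he]
    rw [Finset.sum_congr rfl e1]
    have e2 : (a' i) = Finset.univ.filter (fun e => e ∈ a' i) := by simp
    rw [e2, Finset.sum_filter]
    refine Finset.sum_congr rfl fun e _ => ?_
    by_cases hea : e ∈ a i <;> by_cases hea' : e ∈ a' i <;> simp [hea, hea']
  rw [Finset.sum_congr rfl (fun i (_ : i ∈ Finset.univ) => h1 i), Finset.sum_comm]
  refine Finset.sum_congr rfl fun e _ => ?_
  rw [Finset.sum_add_distrib]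
  congr 1
  · rw [← Finset.sum_filter, Finset.sum_const, nsmul_eq_mul]
    rfl
  · rw [← Finset.sum_filter, Finset.sum_const, nsmul_eq_mul]
    rfl

end Aux
/-- feasibility of the normalized label variables
`θ̄ = θ / L(a^NE; γ)`, `θ̂̄ = θ̃ / L(a^NE; γ)` for the robust-PoA linear program,
together with the identity that the LP objective at `θ̄` equals `L(a'; γ)/L(a^NE; γ)`. -/
theorem normalized_label_variables_feasible
    {n m : ℕ} {E : Type} [Fintype E] [DecidableEq E]
    (A : Fin n → Finset (Finset E)) (hA : ∀ i, (A i).Nonempty)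
    (b τs : Fin m → ℕ → ℝ)
    (hb_nonneg : ∀ j k, 0 ≤ b j k) (hb_mono : ∀ j, Monotone (b j))
    (hb0 : ∀ j, b j 0 = 0) (hτ0 : ∀ j, τs j 0 = 0)
    (δ : ℝ) (hδ : 0 ≤ δ)
    (γ γt : E → Fin m → ℝ) (hγ : ∀ e j, 0 ≤ γ e j) (hγt : ∀ e j, 0 ≤ γt e j)
    (herr : ∀ e j, |γt e j - γ e j| ≤ δ * γ e j)
    (a : Fin n → Finset E) (ha : CG.IsNash A b τs γ γt a)
    (hL : 0 < CG.sysCost b γ a)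
    (a' : Fin n → Finset E) (ha' : ∀ i, a' i ∈ A i) :
    CG.Feasible n b τs δ
        (fun x y z j => CG.labelSum γ a a' x y z j / CG.sysCost b γ a)
        (fun x y z j => CG.labelSum γt a a' x y z j / CG.sysCost b γ a) ∧
      CG.sumI n (fun x y z j => (x + z : ℝ) * b j (x + z) *
          (CG.labelSum γ a a' x y z j / CG.sysCost b γ a)) =
        CG.sysCost b γ a' / CG.sysCost b γ a := by
  classical
  obtain ⟨hmem, hnash⟩ := ha
  have hLne : CG.sysCost b γ a ≠ 0 := ne_of_gt hL
  -- key identity (i): numerator equals the system cost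
  have key1 : CG.sumI n (fun x y z j => ((x : ℝ) + y) * b j (x + y) *
      CG.labelSum γ a a' x y z j) = CG.sysCost b γ a := by
    rw [sumI_labelSum (fun x y z j => ((x : ℝ) + y) * b j (x + y)) (by intro j; simp) γ a a']
    unfold CG.sysCost CG.resCost
    refine Finset.sum_congr rfl fun e _ => ?_
    rw [← labelX_add_labelY a a' e, Finset.mul_sum]
    refine Finset.sum_congr rfl fun j _ => ?_
    push_cast
    ring
  -- key identity: objective numerator equals system cost of a'
  have key2 : CG.sumI n (fun x y z j => ((x : ℝ) + z) * b j (x + z) *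
      CG.labelSum γ a a' x y z j) = CG.sysCost b γ a' := by
    rw [sumI_labelSum (fun x y z j => ((x : ℝ) + z) * b j (x + z)) (by intro j; simp) γ a a']
    unfold CG.sysCost CG.resCost
    refine Finset.sum_congr rfl fun e _ => ?_
    rw [← labelX_add_labelZ a a' e, Finset.mul_sum]
    refine Finset.sum_congr rfl fun j _ => ?_
    push_cast
    ring
  -- combined per-resource cost
  set F : E → ℕ → ℝ := fun e k => CG.resCost b γ e k + CG.resToll τs γt e k with hF
  -- key inequality (ii): numerator is nonpositive (from the Nash property)
  have keyN : CG.sumI n (fun x y z j =>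
      ((y : ℝ) * b j (x + y) - (z : ℝ) * b j (x + y + 1)) * CG.labelSum γ a a' x y z j
        + ((y : ℝ) * τs j (x + y) - (z : ℝ) * τs j (x + y + 1)) *
          CG.labelSum γt a a' x y z j) ≤ 0 := by
    have per_e : ∀ e : E,
        (∑ j, ((CG.labelY a a' e : ℝ) * b j (CG.labelX a a' e + CG.labelY a a' e)
            - (CG.labelZ a a' e : ℝ) * b j (CG.labelX a a' e + CG.labelY a a' e + 1)) * γ e j)
          + (∑ j, ((CG.labelY a a' e : ℝ) * τs j (CG.labelX a a' e + CG.labelY a a' e)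
            - (CG.labelZ a a' e : ℝ) * τs j (CG.labelX a a' e + CG.labelY a a' e + 1)) * γt e j)
        = (CG.labelY a a' e : ℝ) * F e (CG.load a e)
            - (CG.labelZ a a' e : ℝ) * F e (CG.load a e + 1) := by
      intro e
      rw [← labelX_add_labelY a a' e]
      simp only [hF, CG.resCost, CG.resToll, mul_add, Finset.mul_sum,
        ← Finset.sum_add_distrib, ← Finset.sum_sub_distrib]
      refine Finset.sum_congr rfl fun j _ => ?_
      ring
    have e1 : CG.sumI n (fun x y z j =>
        ((y : ℝ) * b j (x + y) - (z : ℝ) * b j (x + y + 1)) * CG.labelSum γ a a' x y z j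
          + ((y : ℝ) * τs j (x + y) - (z : ℝ) * τs j (x + y + 1)) *
            CG.labelSum γt a a' x y z j)
        = ∑ e, ((CG.labelY a a' e : ℝ) * F e (CG.load a e)
            - (CG.labelZ a a' e : ℝ) * F e (CG.load a e + 1)) := by
      rw [sumI_add,
        sumI_labelSum (fun x y z j => ((y : ℝ) * b j (x + y) - (z : ℝ) * b j (x + y + 1)))
          (by intro j; simp) γ a a',
        sumI_labelSum (fun x y z j => ((y : ℝ) * τs j (x + y) - (z : ℝ) * τs j (x + y + 1)))
          (by intro j; simp) γt a a',
        ← Finset.sum_add_distrib]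
      exact Finset.sum_congr rfl fun e _ => per_e e
    rw [e1]
    have hA : ∑ i, CG.agentCost b τs γ γt a i
        = ∑ e, (CG.load a e : ℝ) * F e (CG.load a e) := by
      unfold CG.agentCost
      exact sum_over_agents a (fun e => F e (CG.load a e))
    have hB : ∑ i, CG.agentCost b τs γ γt (Function.update a i (a' i)) i
        = ∑ e, ((CG.labelX a a' e : ℝ) * F e (CG.load a e)
            + (CG.labelZ a a' e : ℝ) * F e (CG.load a e + 1)) := by
      have h0 : ∀ i : Fin n, CG.agentCost b τs γ γt (Function.update a i (a' i)) i
          = ∑ e ∈ a' i, F e (CG.load (Function.update a i (a' i)) e) := by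
        intro i
        unfold CG.agentCost
        rw [Function.update_self]
      rw [Finset.sum_congr rfl (fun i (_ : i ∈ Finset.univ) => h0 i)]
      exact sum_update_cost a a' F
    have hNash : ∑ i, CG.agentCost b τs γ γt a i
        ≤ ∑ i, CG.agentCost b τs γ γt (Function.update a i (a' i)) i :=
      Finset.sum_le_sum fun i _ => hnash i (a' i) (ha' i)
    rw [hA, hB] at hNash
    have expand : ∑ e, ((CG.labelY a a' e : ℝ) * F e (CG.load a e)
          - (CG.labelZ a a' e : ℝ) * F e (CG.load a e + 1))
        = (∑ e, (CG.load a e : ℝ) * F e (CG.load a e))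
          - ∑ e, ((CG.labelX a a' e : ℝ) * F e (CG.load a e)
            + (CG.labelZ a a' e : ℝ) * F e (CG.load a e + 1)) := by
      rw [← Finset.sum_sub_distrib]
      refine Finset.sum_congr rfl fun e _ => ?_
      have hxy : (CG.labelX a a' e : ℝ) + (CG.labelY a a' e : ℝ) = (CG.load a e : ℝ) := by
        rw [← labelX_add_labelY a a' e]
        push_cast
        ring
      rw [← hxy]
      ring
    rw [expand]
    linarith
  refine ⟨⟨?_, ?_, ?_, ?_, ?_⟩, ?_⟩
  · intro x y z j
    exact div_nonneg (Finset.sum_nonneg fun e _ => hγ e j) hL.le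
  · intro x y z j
    exact div_nonneg (Finset.sum_nonneg fun e _ => hγt e j) hL.le
  · -- constraint (i)
    show CG.sumI n (fun x y z j => ((x : ℝ) + y) * b j (x + y) *
        (CG.labelSum γ a a' x y z j / CG.sysCost b γ a)) = 1
    have : (fun (x y z : ℕ) (j : Fin m) => ((x : ℝ) + y) * b j (x + y) *
          (CG.labelSum γ a a' x y z j / CG.sysCost b γ a))
        = fun (x y z : ℕ) (j : Fin m) => (((x : ℝ) + y) * b j (x + y) *
          CG.labelSum γ a a' x y z j) / CG.sysCost b γ a := by
      funext x y z j
      ring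
    rw [this, sumI_div, key1, div_self hLne]
  · -- constraint (ii)
    show CG.sumI n (fun x y z j =>
        ((y : ℝ) * b j (x + y) - (z : ℝ) * b j (x + y + 1)) *
          (CG.labelSum γ a a' x y z j / CG.sysCost b γ a)
        + ((y : ℝ) * τs j (x + y) - (z : ℝ) * τs j (x + y + 1)) *
          (CG.labelSum γt a a' x y z j / CG.sysCost b γ a)) ≤ 0
    have : (fun (x y z : ℕ) (j : Fin m) =>
          ((y : ℝ) * b j (x + y) - (z : ℝ) * b j (x + y + 1)) *
            (CG.labelSum γ a a' x y z j / CG.sysCost b γ a)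
          + ((y : ℝ) * τs j (x + y) - (z : ℝ) * τs j (x + y + 1)) *
            (CG.labelSum γt a a' x y z j / CG.sysCost b γ a))
        = fun (x y z : ℕ) (j : Fin m) =>
          (((y : ℝ) * b j (x + y) - (z : ℝ) * b j (x + y + 1)) *
            CG.labelSum γ a a' x y z j
          + ((y : ℝ) * τs j (x + y) - (z : ℝ) * τs j (x + y + 1)) *
            CG.labelSum γt a a' x y z j) / CG.sysCost b γ a := by
      funext x y z j
      ring
    rw [this, sumI_div]
    exact div_nonpos_of_nonpos_of_nonneg keyN hL.le
  · -- constraint (iii)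
    intro x y z j
    have h1 : (1 - δ) * CG.labelSum γ a a' x y z j ≤ CG.labelSum γt a a' x y z j := by
      unfold CG.labelSum
      rw [Finset.mul_sum]
      refine Finset.sum_le_sum fun e _ => ?_
      have h := abs_le.mp (herr e j)
      have expand : (1 - δ) * γ e j = γ e j - δ * γ e j := by ring
      rw [expand]
      linarith [h.1]
    have h2 : CG.labelSum γt a a' x y z j ≤ (1 + δ) * CG.labelSum γ a a' x y z j := by
      unfold CG.labelSum
      rw [Finset.mul_sum]
      refine Finset.sum_le_sum fun e _ => ?_
      have h := abs_le.mp (herr e j)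
      have expand : (1 + δ) * γ e j = γ e j + δ * γ e j := by ring
      rw [expand]
      linarith [h.2]
    constructor
    · rw [← mul_div_assoc]
      exact (div_le_div_iff_of_pos_right hL).mpr h1
    · rw [← mul_div_assoc]
      exact (div_le_div_iff_of_pos_right hL).mpr h2
  · -- objective identity
    show CG.sumI n (fun x y z j => ((x : ℝ) + z) * b j (x + z) *
        (CG.labelSum γ a a' x y z j / CG.sysCost b γ a))
      = CG.sysCost b γ a' / CG.sysCost b γ a
    have : (fun (x y z : ℕ) (j : Fin m) => ((x : ℝ) + z) * b j (x + z) *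
          (CG.labelSum γ a a' x y z j / CG.sysCost b γ a))
        = fun (x y z : ℕ) (j : Fin m) => (((x : ℝ) + z) * b j (x + z) *
          CG.labelSum γ a a' x y z j) / CG.sysCost b γ a := by
      funext x y z j
      ring
    rw [this, sumI_div, key2]
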